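/- Suppose S=(s_i) is an orientable sequence of order n and period m with w(S) odd. Then D^{-1}(S) consists of two different shifts of a single orientable sequence T of order n+1, period 2m and weight m; specifically, D^{-1}(S) = {T, T'} where T'_i = T_{i+m} for all i. -/

import Mathlib

/-- A sequence has `m` as a (not necessarily least) period. -/
def hasPer (s : ℕ → Bool) (m : ℕ) : Prop := ∀ i, s (i + m) = s i

/-- `m` is the (least positive) period of `s`. -/
def isPeriod (s : ℕ → Bool) (m : ℕ) : Prop :=
  0 < m ∧ hasPer s m ∧ ∀ k, 0 < k → hasPer s k → m ≤ k

/-- The `n`-tuple appearing at position `i` of `s`. -/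
def tup (s : ℕ → Bool) (n i : ℕ) : Fin n → Bool := fun k => s (i + (k : ℕ))

/-- The reverse of an `n`-tuple. -/
def tupRev {n : ℕ} (u : Fin n → Bool) : Fin n → Bool := fun k => u k.rev

/-- An `n`-window sequence of period `m`. -/
def isNWindow (s : ℕ → Bool) (n m : ℕ) : Prop :=
  isPeriod s m ∧ ∀ i j, tup s n i = tup s n j → i ≡ j [MOD m]

/-- The weight of (one period of) `s`. -/
def wt (s : ℕ → Bool) (m : ℕ) : ℕ := ∑ i ∈ Finset.range m, (if s i then 1 else 0)

/-- The complement of a sequence. -/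
def seqCompl (s : ℕ → Bool) : ℕ → Bool := fun i => !(s i)

/-- Two sequences are disjoint if they share no `n`-tuple. -/
def disjointSeq (s t : ℕ → Bool) (n : ℕ) : Prop := ∀ i j, tup s n i ≠ tup t n j

/-- A sequence is primitive if it is disjoint from its complement. -/
def primitiveSeq (s : ℕ → Bool) (n : ℕ) : Prop := disjointSeq s (seqCompl s) n

/-- An orientable sequence of order `n` and period `m`. -/
def isOrientable (s : ℕ → Bool) (n m : ℕ) : Prop :=
  isNWindow s n m ∧ ∀ i j, tup s n i ≠ tupRev (tup s n j)

/-- Two sequences are o-disjoint: disjoint, and no `n`-tuple of one is the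
reverse of an `n`-tuple of the other. -/
def oDisjoint (s t : ℕ → Bool) (n : ℕ) : Prop :=
  disjointSeq s t n ∧ ∀ i j, tup s n i ≠ tupRev (tup t n j)

/-- The Lempel homomorphism `D` on periodic sequences. -/
def Dmap (t : ℕ → Bool) : ℕ → Bool := fun i => xor (t i) (t (i + 1))

/-- The set `D⁻¹(s)` of sequences mapping to `s` under `D`. -/
def Dinv (s : ℕ → Bool) : Set (ℕ → Bool) := { t | Dmap t = s }

def pref (s : ℕ → Bool) : ℕ → Bool
  | 0 => false
  | i + 1 => xor (pref s i) (s i)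

lemma Dmap_pref (s : ℕ → Bool) : Dmap (pref s) = s := by
  funext i
  show xor (pref s i) (xor (pref s i) (s i)) = s i
  cases pref s i <;> cases s i <;> rfl

lemma dinv_form (s t : ℕ → Bool) (ht : Dmap t = s) (i : ℕ) :
    t i = xor (t 0) (pref s i) := by
  induction i with
  | zero => simp [pref]
  | succ i ih =>
    have h := congrFun ht i
    simp only [Dmap] at h
    have h2 : t (i + 1) = xor (t i) (s i) := by
      rw [← h]; cases t i <;> cases t (i+1) <;> rfl
    rw [h2, ih, pref]
    cases t 0 <;> cases pref s i <;> cases s i <;> rfl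

lemma pref_add_per (s : ℕ → Bool) (m : ℕ) (hs : hasPer s m) (i : ℕ) :
    pref s (i + m) = xor (pref s i) (pref s m) := by
  induction i with
  | zero => simp [pref]
  | succ i ih =>
    have e : i + 1 + m = (i + m) + 1 := by omega
    rw [e, pref, ih, hs i, pref]
    cases pref s i <;> cases pref s m <;> cases s i <;> rfl

lemma pref_wt (s : ℕ → Bool) (i : ℕ) : pref s i = decide (Odd (wt s i)) := by
  induction i with
  | zero => simp [pref, wt]
  | succ i ih =>
    have key : ∀ w : ℕ, decide (Odd (w + 1)) = !decide (Odd w) := by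
      intro w
      simp only [Nat.odd_iff]
      rcases Nat.mod_two_eq_zero_or_one w with hw | hw <;> simp [Nat.add_mod, hw]
    rw [pref, ih]
    have e : wt s (i + 1) = wt s i + (if s i then 1 else 0) := Finset.sum_range_succ _ _
    rw [e]
    cases hsi : s i
    · simp
    · simp [Bool.xor_true, key]

lemma hasPer_mul (s : ℕ → Bool) (m : ℕ) (hp : hasPer s m) (q i : ℕ) :
    s (i + q * m) = s i := by
  induction q with
  | zero => simp
  | succ q ih =>
    have e : i + (q + 1) * m = (i + q * m) + m := by ring
    rw [e, hp, ih]

lemma shift_mul (T : ℕ → Bool) (m : ℕ) (hT : ∀ i, T (i + m) = !(T i)) (q i : ℕ) :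
    T (i + q * m) = xor (T i) (decide (Odd q)) := by
  induction q with
  | zero => simp
  | succ q ih =>
    have e : i + (q + 1) * m = (i + q * m) + m := by ring
    rw [e, hT, ih]
    by_cases hq : Odd q <;> cases hti : T i <;>
      simp [hq, hti, Nat.odd_add_one, Nat.not_odd_iff_even, Nat.not_even_iff_odd]

lemma per_dvd (s : ℕ → Bool) (m k : ℕ) (hm : 0 < m) (hpm : hasPer s m)
    (hmin : ∀ k, 0 < k → hasPer s k → m ≤ k) (hk : 0 < k) (h : hasPer s k) :
    m ∣ k := by
  rcases Nat.eq_zero_or_pos (k % m) with h0 | hpos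
  · exact Nat.dvd_of_mod_eq_zero h0
  · exfalso
    have hr : hasPer s (k % m) := by
      intro i
      have e : i + k = (i + k % m) + (k / m) * m := by
        have h1 := Nat.mod_add_div k m
        have h2 : m * (k / m) = (k / m) * m := Nat.mul_comm _ _
        omega
      calc s (i + k % m) = s ((i + k % m) + (k / m) * m) := (hasPer_mul s m hpm _ _).symm
        _ = s (i + k) := by rw [← e]
        _ = s i := h i
    have h1 := hmin (k % m) hpos hr
    have h2 := Nat.mod_lt k hm
    omega

lemma modeq_double (T : ℕ → Bool) (m : ℕ) (hT1 : ∀ i, T (i + m) = !(T i))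
    (i j : ℕ) (hle : i ≤ j) (hmod : i ≡ j [MOD m]) (hij : T i = T j) :
    i ≡ j [MOD 2 * m] := by
  obtain ⟨q, hq⟩ := (Nat.modEq_iff_dvd' hle).mp hmod
  have hj : j = i + q * m := by
    have : m * q = q * m := Nat.mul_comm _ _
    omega
  rw [hj, shift_mul T m hT1 q i] at hij
  have hnot : ¬ Odd q := by
    intro ho
    rw [decide_eq_true ho] at hij
    cases T i <;> simp_all
  obtain ⟨r, hr⟩ := Nat.not_odd_iff_even.mp hnot
  exact (Nat.modEq_iff_dvd' hle).mpr ⟨r, by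
    have h2 : 2 * m * r = m * (r + r) := by ring
    have h3 : m * q = m * (r + r) := by rw [hr]
    omega⟩

/-- Theorem 4, odd case: if `S` is an orientable sequence of order `n` and
period `m` with odd weight, then `D⁻¹(S)` consists of two different shifts (by
`m`) of a single orientable sequence of order `n+1`, period `2m` and weight `m`. -/
theorem lempel_orientable_odd (n m : ℕ) (s : ℕ → Bool)
    (h : isOrientable s n m) (hw : Odd (wt s m)) :
    ∃ t : ℕ → Bool, isOrientable t (n + 1) (2 * m) ∧ wt t (2 * m) = m ∧
      t ≠ (fun i => t (i + m)) ∧ Dinv s = {t, fun i => t (i + m)} := by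
  obtain ⟨⟨⟨hm, hper, hmin⟩, hwin⟩, hrev⟩ := h
  set T := pref s with hTdef
  have hDT : Dmap T = s := Dmap_pref s
  have prefm : pref s m = true := by
    rw [pref_wt]; exact decide_eq_true hw
  have hT1 : ∀ i, T (i + m) = !(T i) := by
    intro i
    rw [hTdef, pref_add_per s m hper i, prefm, Bool.xor_true]
  have hDs : ∀ x, xor (T x) (T (x + 1)) = s x := fun x => congrFun hDT x
  refine ⟨T, ⟨⟨⟨by omega, ?_, ?_⟩, ?_⟩, ?_⟩, ?_, ?_, ?_⟩
  · -- hasPer T (2*m)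
    intro i
    have e : i + 2 * m = (i + m) + m := by ring
    rw [e, hT1, hT1, Bool.not_not]
  · -- minimality
    intro k hk hkT
    have hks : hasPer s k := by
      intro i
      have e : i + k + 1 = (i + 1) + k := by ring
      rw [← hDs (i + k), e, hkT i, hkT (i + 1), hDs i]
    obtain ⟨q, hq⟩ := per_dvd s m k hm hper hmin hk hks
    have hq0 : 0 < q := by
      rcases Nat.eq_zero_or_pos q with h0 | h0
      · subst h0; simp at hq; omega
      · exact h0
    have hT0 : T (0 + q * m) = T 0 := by
      have e : 0 + q * m = 0 + k := by
        have : m * q = q * m := Nat.mul_comm _ _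
        omega
      rw [e]; exact hkT 0
    rw [shift_mul T m hT1 q 0] at hT0
    have hnot : ¬ Odd q := by
      intro ho
      rw [decide_eq_true ho] at hT0
      cases T 0 <;> simp_all
    obtain ⟨r, hr⟩ := Nat.not_odd_iff_even.mp hnot
    have h3 : m * q = m * (r + r) := by rw [hr]
    have h4 : m * 2 ≤ m * (r + r) := Nat.mul_le_mul_left m (by omega)
    omega
  · -- window
    intro i j hij
    have hTk : ∀ k, k ≤ n → T (i + k) = T (j + k) := by
      intro k hk
      exact congrFun hij ⟨k, by omega⟩
    have hs' : tup s n i = tup s n j := by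
      funext k
      show s (i + (k : ℕ)) = s (j + (k : ℕ))
      have hk : (k : ℕ) < n := k.isLt
      rw [← hDs (i + (k : ℕ)), ← hDs (j + (k : ℕ)),
        hTk (k : ℕ) (by omega)]
      have e1 : i + (k : ℕ) + 1 = i + ((k : ℕ) + 1) := by ring
      have e2 : j + (k : ℕ) + 1 = j + ((k : ℕ) + 1) := by ring
      rw [e1, e2, hTk ((k : ℕ) + 1) (by omega)]
    have hmod := hwin i j hs'
    have hTij : T i = T j := by
      have := hTk 0 (by omega)
      simpa using this
    rcases le_total i j with hle | hle
    · exact modeq_double T m hT1 i j hle hmod hTij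
    · exact (modeq_double T m hT1 j i hle hmod.symm hTij.symm).symm
  · -- reverse
    intro i j heq
    apply hrev i j
    funext k
    have key : ∀ a, a ≤ n → T (i + a) = T (j + (n - a)) := by
      intro a ha
      have h1 := congrFun heq ⟨a, by omega⟩
      simp only [tup, tupRev] at h1
      rw [Fin.val_rev] at h1
      have e : n + 1 - (a + 1) = n - a := by omega
      simpa [e] using h1
    show s (i + (k : ℕ)) = tupRev (tup s n j) k
    have hkn : (k : ℕ) < n := k.isLt
    have hrevval : ((Fin.rev k : Fin n) : ℕ) = n - 1 - (k : ℕ) := by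
      rw [Fin.val_rev]; omega
    have hgoal : tupRev (tup s n j) k = s (j + (n - 1 - (k : ℕ))) := by
      simp only [tupRev, tup, hrevval]
    rw [hgoal]
    set a := (k : ℕ)
    set b := n - 1 - a with hb
    have hb1 : n - (a + 1) = b := by omega
    have hb2 : n - a = b + 1 := by omega
    have e1 : T (i + a) = T (j + (b + 1)) := by
      rw [key a (by omega), hb2]
    have e2 : T (i + a + 1) = T (j + b) := by
      have := key (a + 1) (by omega)
      rw [hb1] at this
      have e : i + a + 1 = i + (a + 1) := by ring
      rw [e]; exact this
    rw [← hDs (i + a), e1, e2, ← hDs (j + b)]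
    have e3 : j + b + 1 = j + (b + 1) := by ring
    rw [e3, Bool.xor_comm]
  · -- weight
    have h2m : 2 * m = m + m := by ring
    rw [wt, h2m, Finset.sum_range_add, ← Finset.sum_add_distrib]
    have hone : ∀ i, ((if T i then (1:ℕ) else 0) + (if T (m + i) then 1 else 0)) = 1 := by
      intro i
      have e : m + i = i + m := by ring
      rw [e, hT1]
      cases T i <;> rfl
    calc (∑ i ∈ Finset.range m, ((if T i then (1:ℕ) else 0) + (if T (m + i) then 1 else 0)))
        = ∑ i ∈ Finset.range m, 1 := Finset.sum_congr rfl (fun i _ => hone i)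
      _ = m := by simp
  · -- T ≠ shift
    intro heq
    have h0 := congrFun heq 0
    have hT0 : T 0 = false := rfl
    have hTm : T (0 + m) = !(T 0) := hT1 0
    simp [hT0] at h0 hTm
    rw [h0] at hTm
    exact absurd hTm (by simp)
  · -- Dinv
    ext t
    constructor
    · intro ht
      have htf := dinv_form s t ht
      cases h0 : t 0
      · left
        funext i
        rw [htf i, h0, Bool.false_xor]
      · right
        funext i
        rw [htf i, h0, Bool.true_xor, ← hT1 i]
    · intro ht
      rcases ht with ht | ht
      · rw [ht]; exact hDT
      · rw [ht]
        funext i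
        show xor (T (i + m)) (T (i + 1 + m)) = s i
        rw [hT1, hT1]
        rw [← hDs i]
        cases T i <;> cases T (i + 1) <;> rfl
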